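/- Degenerate case impossibility: if the co-rank condition fails (max_t ℓ_t > min_t r_t) with donor p = argmax ℓ and receiver q = argmin r, and the invariants L_b[t] ≤ i_t ≤ U_b[t] hold with the additional invariant that any index vector j with L_b ≤ j ≤ U_b and Σ j = K co-ranking-valid satisfies j_p ≤ i_p and j_q ≥ i_q whenever bounds were tightened consistently, then Δ = min(⌈(i_p − L_b[p])/2⌉, ⌈(U_b[q] − i_q)/2⌉) ≥ 1, i.e., both i_p > L_b[p] and U_b[q] > i_q. -/
import Mathlib


open scoped BigOperators Classical

/-- Left boundary value `ℓ_t` of the cut: `L_t[i_t - 1]` if `i_t > 0`, else `⊥` (−∞). -/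
noncomputable def lcut {m : ℕ} (n : Fin m → ℕ) (L : ∀ t, Fin (n t) → ℝ)
    (i : Fin m → ℕ) (t : Fin m) : EReal :=
  if h : 0 < i t ∧ i t ≤ n t then ((L t ⟨i t - 1, by omega⟩ : ℝ) : EReal) else ⊥

/-- Right boundary value `r_t` of the cut: `L_t[i_t]` if `i_t < n_t`, else `⊤` (+∞). -/
noncomputable def rcut {m : ℕ} (n : Fin m → ℕ) (L : ∀ t, Fin (n t) → ℝ)
    (i : Fin m → ℕ) (t : Fin m) : EReal :=
  if h : i t < n t then ((L t ⟨i t, h⟩ : ℝ) : EReal) else ⊤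

/-- degenerate case impossibility: if the co-rank condition fails at
the extremal donor/receiver pair and a valid co-rank vector lies within the bounds,
then `i_p > L_b[p]`, `i_q < U_b[q]`, hence `Δ ≥ 1`. -/
theorem degenerate_case_impossible {m : ℕ} (n : Fin m → ℕ) (L : ∀ t, Fin (n t) → ℝ)
    (hmono : ∀ t, Monotone (L t))
    (hinj : Function.Injective (fun x : Σ t : Fin m, Fin (n t) => L x.1 x.2))
    (K : ℕ) (Lb i Ub : Fin m → ℕ)
    (hinv : ∀ t, Lb t ≤ i t ∧ i t ≤ Ub t ∧ Ub t ≤ n t)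
    (hsum : ∑ t, i t = K)
    (p q : Fin m) (hpq : p ≠ q)
    (hpmax : ∀ t, lcut n L i t ≤ lcut n L i p)
    (hqmin : ∀ t, rcut n L i q ≤ rcut n L i t)
    (hp : 0 < i p) (hq : i q < n q)
    (hviol : L q ⟨i q, hq⟩ < L p ⟨i p - 1, by have := (hinv p).2; omega⟩)
    (hwitness : ∃ j : Fin m → ℕ, (∀ t, Lb t ≤ j t ∧ j t ≤ Ub t) ∧ (∑ t, j t = K) ∧
        (⨆ t, lcut n L j t) ≤ ⨅ t, rcut n L j t) :
    Lb p < i p ∧ i q < Ub q ∧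
      1 ≤ min ((i p - Lb p + 1) / 2) ((Ub q - i q + 1) / 2) := by
  obtain ⟨j, hjb, hjsum, hvalid⟩ := hwitness
  have hall : ∀ a b, lcut n L j a ≤ rcut n L j b := fun a b =>
    le_trans (le_iSup _ a) (le_trans hvalid (iInf_le _ b))
  have hipn : i p ≤ n p := by have := hinv p; omega
  -- Sub-lemma A: not (i p ≤ j p and j q ≤ i q)
  have hA : ¬ (i p ≤ j p ∧ j q ≤ i q) := by
    rintro ⟨h1, h2⟩
    have hjp_pos : 0 < j p := lt_of_lt_of_le hp h1
    have hjpn : j p ≤ n p := le_trans (hjb p).2 (hinv p).2.2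
    have hjqn : j q < n q := lt_of_le_of_lt h2 hq
    have := hall p q
    unfold lcut rcut at this
    rw [dif_pos ⟨hjp_pos, hjpn⟩, dif_pos hjqn] at this
    have hr : L p ⟨j p - 1, by omega⟩ ≤ L q ⟨j q, hjqn⟩ := EReal.coe_le_coe_iff.mp this
    have hB : L p ⟨i p - 1, by omega⟩ ≤ L p ⟨j p - 1, by omega⟩ :=
      hmono p (by simp [Fin.le_def]; omega)
    have hC : L q ⟨j q, hjqn⟩ ≤ L q ⟨i q, hq⟩ := hmono q (by simp [Fin.le_def]; omega)
    have : L p ⟨i p - 1, by omega⟩ ≤ L q ⟨i q, hq⟩ := le_trans hB (le_trans hr hC)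
    exact absurd this (not_le.mpr hviol)
  have hLbp : Lb p < i p := by
    by_contra h
    push_neg at h
    have h1 : i p ≤ j p := le_trans h (hjb p).1
    have h2 : i q < j q := lt_of_not_ge fun h2 => hA ⟨h1, h2⟩
    have hex : ∃ t, j t < i t := by
      by_contra hc
      push_neg at hc
      have : ∑ t, i t < ∑ t, j t :=
        Finset.sum_lt_sum (fun t _ => hc t) ⟨q, Finset.mem_univ q, h2⟩
      omega
    obtain ⟨t, ht⟩ := hex
    have htp : t ≠ p := by intro e; subst e; omega
    have hit_le : i t ≤ n t := by have := hinv t; omega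
    have hjtn : j t < n t := lt_of_lt_of_le ht hit_le
    have hjp_pos : 0 < j p := lt_of_lt_of_le hp h1
    have hjpn : j p ≤ n p := le_trans (hjb p).2 (hinv p).2.2
    have hpt := hall p t
    unfold lcut rcut at hpt
    rw [dif_pos ⟨hjp_pos, hjpn⟩, dif_pos hjtn] at hpt
    have hrA : L p ⟨j p - 1, by omega⟩ ≤ L t ⟨j t, hjtn⟩ := EReal.coe_le_coe_iff.mp hpt
    have hrB : L p ⟨i p - 1, by omega⟩ ≤ L p ⟨j p - 1, by omega⟩ :=
      hmono p (by simp [Fin.le_def]; omega)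
    have hrC : L t ⟨j t, hjtn⟩ ≤ L t ⟨i t - 1, by omega⟩ :=
      hmono t (by simp [Fin.le_def]; omega)
    have hD := hpmax t
    unfold lcut at hD
    rw [dif_pos ⟨by omega, hit_le⟩, dif_pos ⟨hp, hipn⟩] at hD
    have hrD : L t ⟨i t - 1, by omega⟩ ≤ L p ⟨i p - 1, by omega⟩ :=
      EReal.coe_le_coe_iff.mp hD
    have heq : L p ⟨j p - 1, by omega⟩ = L t ⟨j t, hjtn⟩ :=
      le_antisymm hrA (le_trans hrC (le_trans hrD hrB))
    have := hinj (a₁ := ⟨p, ⟨j p - 1, by omega⟩⟩) (a₂ := ⟨t, ⟨j t, hjtn⟩⟩) heq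
    exact htp (Sigma.mk.inj_iff.mp this).1.symm
  have hUbq : i q < Ub q := by
    by_contra h
    push_neg at h
    have h2 : j q ≤ i q := le_trans (hjb q).2 h
    have h1 : j p < i p := lt_of_not_ge fun h1 => hA ⟨h1, h2⟩
    have hex : ∃ t, i t < j t := by
      by_contra hc
      push_neg at hc
      have : ∑ t, j t < ∑ t, i t :=
        Finset.sum_lt_sum (fun t _ => hc t) ⟨p, Finset.mem_univ p, h1⟩
      omega
    obtain ⟨t, ht⟩ := hex
    have htq : t ≠ q := by intro e; subst e; omega
    have hit_n : i t < n t := lt_of_lt_of_le ht (le_trans (hjb t).2 (hinv t).2.2)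
    have hjtn : j t ≤ n t := le_trans (hjb t).2 (hinv t).2.2
    have hjq_n : j q < n q := lt_of_le_of_lt h2 hq
    have htq2 := hall t q
    unfold lcut rcut at htq2
    rw [dif_pos ⟨by omega, hjtn⟩, dif_pos hjq_n] at htq2
    have hrA : L t ⟨j t - 1, by omega⟩ ≤ L q ⟨j q, hjq_n⟩ := EReal.coe_le_coe_iff.mp htq2
    have hrB : L t ⟨i t, hit_n⟩ ≤ L t ⟨j t - 1, by omega⟩ :=
      hmono t (by simp [Fin.le_def]; omega)
    have hrC : L q ⟨j q, hjq_n⟩ ≤ L q ⟨i q, hq⟩ := hmono q (by simp [Fin.le_def]; omega)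
    have hD := hqmin t
    unfold rcut at hD
    rw [dif_pos hit_n, dif_pos hq] at hD
    have hrD : L q ⟨i q, hq⟩ ≤ L t ⟨i t, hit_n⟩ := EReal.coe_le_coe_iff.mp hD
    have heq : L t ⟨j t - 1, by omega⟩ = L q ⟨j q, hjq_n⟩ :=
      le_antisymm hrA (le_trans hrC (le_trans hrD hrB))
    have := hinj (a₁ := ⟨t, ⟨j t - 1, by omega⟩⟩) (a₂ := ⟨q, ⟨j q, hjq_n⟩⟩) heq
    exact htq (Sigma.mk.inj_iff.mp this).1
  exact ⟨hLbp, hUbq, by omega⟩
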